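/- Let a, b, m' be points with m' on a circular arc with endpoints a and b, where the arc subtends an inscribed angle φ ≤ π at m' (so the angle ∠a m' b = φ is constant along the arc). Then |am'| + |m'b| is maximized exactly when m' is the midpoint of the arc. -/

import Mathlib

set_option maxHeartbeats 1000000

open Metric
open scoped RealInnerProductSpace

lemma key_alg (R p h x y : ℝ) (hR : 0 < R) (hp : 0 < p)
    (h1 : p^2 + h^2 = R^2) (h2 : x^2 + y^2 = R^2) (hy : h ≤ y) :
    Real.sqrt ((p-x)^2+(y-h)^2) + Real.sqrt ((p+x)^2+(y-h)^2) ≤ 2*Real.sqrt (p^2+(R-h)^2) ∧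
    (Real.sqrt ((p-x)^2+(y-h)^2) + Real.sqrt ((p+x)^2+(y-h)^2) = 2*Real.sqrt (p^2+(R-h)^2)
      ↔ (x = 0 ∧ y = R)) := by
  have hhR : h < R := by nlinarith
  have hyR : y ≤ R := by nlinarith
  have hRh : (0:ℝ) < R + h := by nlinarith
  obtain ⟨u1, hu1def⟩ : ∃ t : ℝ, t = (p-x)^2+(y-h)^2 := ⟨_, rfl⟩
  obtain ⟨u2, hu2def⟩ : ∃ t : ℝ, t = (p+x)^2+(y-h)^2 := ⟨_, rfl⟩
  rw [← hu1def, ← hu2def]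
  have hu1 : 0 ≤ u1 := hu1def ▸ add_nonneg (sq_nonneg _) (sq_nonneg _)
  have hu2 : 0 ≤ u2 := hu2def ▸ add_nonneg (sq_nonneg _) (sq_nonneg _)
  obtain ⟨G, hGdef⟩ : ∃ t : ℝ, t = 4*p^2+4*(R-h)^2-(u1+u2) := ⟨_, rfl⟩
  have hG : 0 ≤ G := by
    rw [hGdef, hu1def, hu2def]
    rcases le_or_gt 0 h with h0 | h0
    · nlinarith [mul_nonneg h0 (sub_nonneg.2 hy)]
    · nlinarith [mul_nonneg (le_of_lt (neg_pos.2 h0)) (sub_nonneg.2 hyR)]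
  have hbr : (0:ℝ) < (R+h)*(R+y)-4*R*h := by nlinarith [mul_nonneg hRh.le (sub_nonneg.2 hy)]
  have hD : G^2 - 4*(u1*u2) = 16*(R-h)*(R-y)*((R+h)*(R+y)-4*R*h) := by
    rw [hGdef, hu1def, hu2def]
    linear_combination (16*(R-h)^2 - 16*(y-h)^2) * h1 + (-16*(R-h)^2) * h2
  have hDpos : 0 ≤ G^2 - 4*(u1*u2) := by
    rw [hD]
    have := mul_nonneg (mul_nonneg (by nlinarith : (0:ℝ) ≤ 16*(R-h)) (sub_nonneg.2 hyR)) hbr.le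
    linarith [this]
  have hprod : Real.sqrt u1 * Real.sqrt u2 = Real.sqrt (u1*u2) := (Real.sqrt_mul hu1 _).symm
  have hsqle : 2 * Real.sqrt (u1*u2) ≤ G := by
    have h4 : u1*u2 ≤ (G/2)^2 := by nlinarith
    have := Real.sqrt_le_sqrt h4
    rw [Real.sqrt_sq (by linarith : (0:ℝ) ≤ G/2)] at this
    linarith
  have hq : (0:ℝ) ≤ p^2+(R-h)^2 := add_nonneg (sq_nonneg _) (sq_nonneg _)
  have hT2 : (2*Real.sqrt (p^2+(R-h)^2))^2 = 4*(p^2+(R-h)^2) := by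
    rw [mul_pow, Real.sq_sqrt hq]; ring
  have hS2 : (Real.sqrt u1 + Real.sqrt u2)^2 = u1 + u2 + 2*Real.sqrt (u1*u2) := by
    rw [add_sq, Real.sq_sqrt hu1, Real.sq_sqrt hu2, mul_assoc, hprod]; ring
  have hSnn : 0 ≤ Real.sqrt u1 + Real.sqrt u2 := add_nonneg (Real.sqrt_nonneg _) (Real.sqrt_nonneg _)
  have hTnn : 0 ≤ 2*Real.sqrt (p^2+(R-h)^2) := by nlinarith [Real.sqrt_nonneg (p^2+(R-h)^2)]
  have hmain : Real.sqrt u1 + Real.sqrt u2 ≤ 2*Real.sqrt (p^2+(R-h)^2) := by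
    have hsq : (Real.sqrt u1 + Real.sqrt u2)^2 ≤ (2*Real.sqrt (p^2+(R-h)^2))^2 := by
      rw [hS2, hT2]; linarith
    have := Real.sqrt_le_sqrt hsq
    rwa [Real.sqrt_sq hSnn, Real.sqrt_sq hTnn] at this
  refine ⟨hmain, ⟨fun heq => ?_, fun ⟨hx0, hyR'⟩ => ?_⟩⟩
  · have hsq : (Real.sqrt u1 + Real.sqrt u2)^2 = (2*Real.sqrt (p^2+(R-h)^2))^2 := by rw [heq]
    rw [hS2, hT2] at hsq
    have hGe : 2*Real.sqrt (u1*u2) = G := by linarith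
    have hsq2 : 4*(u1*u2) = G^2 := by
      have : (2*Real.sqrt (u1*u2))^2 = G^2 := by rw [hGe]
      rw [mul_pow, Real.sq_sqrt (mul_nonneg hu1 hu2)] at this
      linarith
    have hzero : 16*(R-h)*(R-y)*((R+h)*(R+y)-4*R*h) = 0 := by linarith [hD]
    have hyRe : y = R := by
      rcases mul_eq_zero.1 hzero with h' | h'
      · rcases mul_eq_zero.1 h' with h'' | h''
        · linarith
        · linarith
      · linarith
    refine ⟨?_, hyRe⟩
    have : x^2 = 0 := by rw [hyRe] at h2; linarith
    exact pow_eq_zero_iff (by norm_num) |>.1 this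
  · subst hx0 hyR'
    rw [hu1def, hu2def]
    norm_num
    ring

/-- Let `a ≠ b` lie on a circle with center `o` and radius `R`, and consider the arc of
the circle cut off by the chord `ab` on the side `{x : ⟪u, x⟫ ≥ ⟪u, a⟫}` of the chord
line (where `u` is a normal direction of the chord line, `⟪u, a⟫ = ⟪u, b⟫`). Let `m` be
the midpoint of this arc (the point of the arc equidistant from `a` and `b`). Then for
every point `m'` of the arc, `|am'| + |m'b| ≤ |am| + |mb|`, with equality iff
`m' = m`. -/
theorem stmt15 (o : EuclideanSpace ℝ (Fin 2)) (R : ℝ) (hR : 0 < R)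
    (a b : EuclideanSpace ℝ (Fin 2)) (ha : a ∈ sphere o R) (hb : b ∈ sphere o R)
    (hab : a ≠ b)
    (u : EuclideanSpace ℝ (Fin 2)) (hu : u ≠ 0) (huab : ⟪u, a⟫ = ⟪u, b⟫)
    (m : EuclideanSpace ℝ (Fin 2)) (hm : m ∈ sphere o R)
    (hmside : ⟪u, a⟫ < ⟪u, m⟫) (hmmid : dist a m = dist m b) :
    ∀ m' ∈ sphere o R, ⟪u, a⟫ ≤ ⟪u, m'⟫ →
      dist a m' + dist m' b ≤ dist a m + dist m b ∧
        (dist a m' + dist m' b = dist a m + dist m b ↔ m' = m) := by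
  intro m' hm' hside
  rw [mem_sphere] at ha hb hm hm'
  have hA : ‖a - o‖ = R := by rw [← dist_eq_norm]; exact ha
  have hB : ‖b - o‖ = R := by rw [← dist_eq_norm]; exact hb
  have hM : ‖m - o‖ = R := by rw [← dist_eq_norm]; exact hm
  have hX : ‖m' - o‖ = R := by rw [← dist_eq_norm]; exact hm'
  have habn : a - b ≠ 0 := sub_ne_zero.2 hab
  have habnorm : (0:ℝ) < ‖a - b‖ := norm_pos_iff.2 habn
  -- orthogonality of the chord and m - o
  have horth : ⟪a - b, m - o⟫ = 0 := by
    have h1 : ‖a - m‖ = ‖m - b‖ := by rw [← dist_eq_norm, ← dist_eq_norm]; exact hmmid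
    have h2 : ‖(a - o) - (m - o)‖^2 = ‖(m - o) - (b - o)‖^2 := by
      rw [show (a - o) - (m - o) = a - m from by abel, show (m - o) - (b - o) = m - b from by abel, h1]
    rw [norm_sub_sq_real (a - o) (m - o), norm_sub_sq_real (m - o) (b - o), hA, hM, hB] at h2
    have h3 : ⟪a - o, m - o⟫ = ⟪m - o, b - o⟫ := by linarith
    rw [show a - b = (a - o) - (b - o) from by abel, inner_sub_left, h3,
      real_inner_comm (m - o) (b - o)]
    ring
  -- orthogonality of u and the chord
  have huorth : ⟪a - b, u⟫ = 0 := by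
    rw [real_inner_comm, inner_sub_right, huab]; ring
  -- the orthonormal basis
  set e1 : EuclideanSpace ℝ (Fin 2) := ‖a - b‖⁻¹ • (a - b) with he1def
  set e2 : EuclideanSpace ℝ (Fin 2) := R⁻¹ • (m - o) with he2def
  have hinner12 : ⟪e1, e2⟫ = 0 := by
    rw [he1def, he2def, real_inner_smul_left, real_inner_smul_right, horth]; ring
  have hon : Orthonormal ℝ ![e1, e2] := by
    constructor
    · intro i
      fin_cases i
      · show ‖e1‖ = 1
        rw [he1def, norm_smul, norm_inv, norm_norm, inv_mul_cancel₀ habnorm.ne']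
      · show ‖e2‖ = 1
        rw [he2def, norm_smul, norm_inv, Real.norm_eq_abs, abs_of_pos hR, hM,
          inv_mul_cancel₀ hR.ne']
    · intro i j hij
      fin_cases i <;> fin_cases j
      · exact absurd rfl hij
      · exact hinner12
      · show ⟪e2, e1⟫ = 0
        rw [real_inner_comm]; exact hinner12
      · exact absurd rfl hij
  have hcard : Fintype.card (Fin 2) = Module.finrank ℝ (EuclideanSpace ℝ (Fin 2)) := by
    simp [finrank_euclideanSpace_fin]
  have hBason : Orthonormal ℝ (basisOfOrthonormalOfCardEqFinrank hon hcard) := by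
    rwa [coe_basisOfOrthonormalOfCardEqFinrank]
  set ob : OrthonormalBasis (Fin 2) ℝ (EuclideanSpace ℝ (Fin 2)) :=
    (basisOfOrthonormalOfCardEqFinrank hon hcard).toOrthonormalBasis hBason with hobdef
  have hob : ∀ i, ob i = ![e1, e2] i := by
    intro i
    rw [hobdef, Module.Basis.coe_toOrthonormalBasis, coe_basisOfOrthonormalOfCardEqFinrank]
  have hob0 : ob 0 = e1 := hob 0
  have hob1 : ob 1 = e2 := hob 1
  have pars : ∀ z w : EuclideanSpace ℝ (Fin 2), ⟪z, w⟫ = ⟪e1, z⟫*⟪e1, w⟫ + ⟪e2, z⟫*⟪e2, w⟫ := by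
    intro z w
    have := ob.sum_inner_mul_inner z w
    rw [Fin.sum_univ_two, hob0, hob1, real_inner_comm e1 z, real_inner_comm e2 z] at this
    linarith
  have normsq : ∀ z : EuclideanSpace ℝ (Fin 2), ‖z‖^2 = ⟪e1, z⟫^2 + ⟪e2, z⟫^2 := by
    intro z
    rw [← real_inner_self_eq_norm_sq, pars z z]; ring
  -- coordinates
  obtain ⟨p, hpdef⟩ : ∃ t : ℝ, t = ⟪e1, a - o⟫ := ⟨_, rfl⟩
  obtain ⟨h, hhdef⟩ : ∃ t : ℝ, t = ⟪e2, a - o⟫ := ⟨_, rfl⟩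
  obtain ⟨x, hxdef⟩ : ∃ t : ℝ, t = ⟪e1, m' - o⟫ := ⟨_, rfl⟩
  obtain ⟨y, hydef⟩ : ∃ t : ℝ, t = ⟪e2, m' - o⟫ := ⟨_, rfl⟩
  obtain ⟨q, hqdef⟩ : ∃ t : ℝ, t = ⟪e1, b - o⟫ := ⟨_, rfl⟩
  obtain ⟨c, hcdef⟩ : ∃ t : ℝ, t = ⟪e2, u⟫ := ⟨_, rfl⟩
  have hpA : p^2 + h^2 = R^2 := by
    have := normsq (a - o); rw [hA, ← hpdef, ← hhdef] at this; linarith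
  have hxy : x^2 + y^2 = R^2 := by
    have := normsq (m' - o); rw [hX, ← hxdef, ← hydef] at this; linarith
  have he1m : ⟪e1, m - o⟫ = 0 := by
    rw [he1def, real_inner_smul_left, horth]; ring
  have he2m : ⟪e2, m - o⟫ = R := by
    rw [he2def, real_inner_smul_left, real_inner_self_eq_norm_sq, hM, sq]
    field_simp
  have hb2 : ⟪e2, b - o⟫ = h := by
    have h1 : ⟪e2, a - b⟫ = 0 := by
      rw [he2def, real_inner_smul_left, real_inner_comm (a - b) (m - o), horth]
      ring
    have h2 : ⟪e2, a - b⟫ = ⟪e2, a - o⟫ - ⟪e2, b - o⟫ := by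
      rw [show a - b = (a - o) - (b - o) from by abel, inner_sub_right]
    rw [h1] at h2; rw [← hhdef] at h2; linarith
  have hqB : q^2 + h^2 = R^2 := by
    have := normsq (b - o); rw [hB, ← hqdef, hb2] at this; linarith
  have hpq : p - q = ‖a - b‖ := by
    have h1 : ⟪e1, a - b⟫ = ‖a - b‖ := by
      rw [he1def, real_inner_smul_left, real_inner_self_eq_norm_sq, sq]
      field_simp
    have h2 : ⟪e1, a - b⟫ = ⟪e1, a - o⟫ - ⟪e1, b - o⟫ := by
      rw [show a - b = (a - o) - (b - o) from by abel, inner_sub_right]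
    rw [h1, ← hpdef, ← hqdef] at h2; linarith
  have hq_eq : q = -p := by
    have h0 : (p - q) * (p + q) = 0 := by linear_combination hpA - hqB
    rcases mul_eq_zero.1 h0 with h' | h'
    · exfalso; rw [hpq] at h'; exact habnorm.ne' h'
    · linarith
  have hp : 0 < p := by rw [hq_eq] at hpq; linarith
  have hhR : h < R := by nlinarith
  have he1u : ⟪e1, u⟫ = 0 := by
    rw [he1def, real_inner_smul_left, huorth]; ring
  have hinner_diff : ∀ z : EuclideanSpace ℝ (Fin 2),
      ⟪u, z⟫ - ⟪u, a⟫ = c * (⟪e2, z - o⟫ - h) := by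
    intro z
    have h1 : ⟪u, z⟫ - ⟪u, a⟫ = ⟪u, z - o - (a - o)⟫ := by
      rw [show z - o - (a - o) = z - a from by abel]
      exact (inner_sub_right u z a).symm
    have h2 := pars u (z - a)
    rw [he1u, show z - a = (z - o) - (a - o) from by abel, inner_sub_right (𝕜 := ℝ) e2,
      ← hhdef, ← hcdef] at h2
    rw [h1, h2]; ring
  have hc : 0 < c := by
    have := hinner_diff m
    rw [he2m] at this
    nlinarith [hmside, this]
  have hyh : h ≤ y := by
    have := hinner_diff m'
    rw [← hydef] at this
    nlinarith [hside, this]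
  -- distance formulas
  have dform : ∀ z w : EuclideanSpace ℝ (Fin 2),
      dist z w = Real.sqrt ((⟪e1, z - o⟫ - ⟪e1, w - o⟫)^2 + (⟪e2, z - o⟫ - ⟪e2, w - o⟫)^2) := by
    intro z w
    rw [dist_eq_norm, ← Real.sqrt_sq (norm_nonneg (z - w)), normsq,
      show z - w = (z - o) - (w - o) from by abel, inner_sub_right e1 (z - o) (w - o),
      inner_sub_right e2 (z - o) (w - o)]
  have hdam' : dist a m' = Real.sqrt ((p - x)^2 + (y - h)^2) := by
    rw [dform a m', ← hpdef, ← hhdef, ← hxdef, ← hydef]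
    congr 1; ring
  have hdm'b : dist m' b = Real.sqrt ((p + x)^2 + (y - h)^2) := by
    rw [dform m' b, ← hxdef, ← hydef, ← hqdef, hb2, hq_eq]
    congr 1; ring
  have hdam : dist a m = Real.sqrt (p^2 + (R - h)^2) := by
    rw [dform a m, ← hpdef, ← hhdef, he1m, he2m]
    congr 1; ring
  have hdmb : dist m b = Real.sqrt (p^2 + (R - h)^2) := by
    rw [dform m b, ← hqdef, hb2, he1m, he2m, hq_eq]
    congr 1; ring
  obtain ⟨hle, hiff⟩ := key_alg R p h x y hR hp hpA hxy hyh
  rw [hdam', hdm'b, hdam, hdmb,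
    show Real.sqrt (p^2 + (R - h)^2) + Real.sqrt (p^2 + (R - h)^2)
      = 2 * Real.sqrt (p^2 + (R - h)^2) from by ring]
  refine ⟨hle, hiff.trans ?_⟩
  constructor
  · rintro ⟨hx0, hyR⟩
    have hn : ‖m' - m‖^2 = 0 := by
      rw [normsq, show m' - m = (m' - o) - (m - o) from by abel,
        inner_sub_right e1 (m' - o) (m - o), inner_sub_right e2 (m' - o) (m - o),
        he1m, he2m, ← hxdef, ← hydef, hx0, hyR]
      ring
    have hn2 : m' - m = 0 := by
      rw [← norm_eq_zero]
      exact pow_eq_zero_iff (n := 2) (by norm_num) |>.1 hn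
    exact sub_eq_zero.1 hn2
  · intro hmm'
    exact ⟨by rw [hxdef, hmm', he1m], by rw [hydef, hmm', he2m]⟩
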